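/- For all natural numbers n ≥ 2 and r ≥ 1, the following binomial identity holds: n²·C(r+1, n) + (r+1)·C(r−1, n−2) + C(r−1, n−1) = C(n+1, 2)·C(r+1, n) + C(n+1, 2)·C(r, n−1) + C(n, 2)·C(r, n). (Equivalently, the difference dim B_r Λ^{1,1}(K) − dim B_r Λ^{0,2}(K) of bubble-space dimensions on an n-simplex K for degree-r polynomial form-valued forms equals C(n+1,2)·C(r+1,n), the number of degrees of freedom of the degree-r Regge finite element.) -/
import Mathlib


/-- For `n ≥ 2` and `r ≥ 1`:
`n²·C(r+1,n) + (r+1)·C(r−1,n−2) + C(r−1,n−1)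
  = C(n+1,2)·C(r+1,n) + C(n+1,2)·C(r,n−1) + C(n,2)·C(r,n)`,
i.e. the difference of bubble-space dimensions `dim B_r Λ^{1,1}(K) − dim B_r Λ^{0,2}(K)`
on an `n`-simplex equals `C(n+1,2)·C(r+1,n)`, the number of degrees of freedom of the
degree-`r` Regge finite element. -/
theorem regge_dof_count (n r : ℕ) (hn : 2 ≤ n) (hr : 1 ≤ r) :
    n ^ 2 * Nat.choose (r + 1) n + (r + 1) * Nat.choose (r - 1) (n - 2) +
        Nat.choose (r - 1) (n - 1)
      = Nat.choose (n + 1) 2 * Nat.choose (r + 1) n +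
          Nat.choose (n + 1) 2 * Nat.choose r (n - 1) +
          Nat.choose n 2 * Nat.choose r n := by
  obtain ⟨m, rfl⟩ : ∃ m, n = m + 2 := ⟨n - 2, by omega⟩
  obtain ⟨s, rfl⟩ : ∃ s, r = s + 1 := ⟨r - 1, by omega⟩
  simp only [Nat.add_sub_cancel, show m + 2 - 1 = m + 1 from rfl,
    show m + 2 - 2 = m from rfl]
  -- abbreviations
  set A := Nat.choose s m with hA
  set B := Nat.choose s (m + 1) with hB
  set D := Nat.choose s (m + 2) with hD
  have h1 : (s + 1) * A = (A + B) * (m + 1) := by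
    have := Nat.add_one_mul_choose_eq s m
    simpa [Nat.choose_succ_succ, Nat.succ_eq_add_one, hA, hB, mul_comm] using this
  have hc1 : Nat.choose (s + 1) (m + 1) = A + B := by
    rw [Nat.choose_succ_succ]
  have hc2 : Nat.choose (s + 1) (m + 2) = B + D := by
    rw [Nat.choose_succ_succ]
  have hc3 : Nat.choose (s + 1 + 1) (m + 2) = A + B + (B + D) := by
    rw [Nat.choose_succ_succ, hc1, hc2]
  have he : 2 * Nat.choose (m + 2 + 1) 2 = (m + 3) * (m + 2) := by
    rw [Nat.choose_two_right, Nat.add_sub_cancel]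
    exact Nat.mul_div_cancel' (Even.two_dvd (by simpa [mul_comm] using Nat.even_mul_succ_self (m + 2))) 
  have hf : 2 * Nat.choose (m + 2) 2 = (m + 2) * (m + 1) := by
    rw [Nat.choose_two_right, show m + 2 - 1 = m + 1 from rfl]
    exact Nat.mul_div_cancel' (Even.two_dvd (by simpa [mul_comm] using Nat.even_mul_succ_self (m + 1)))
  rw [hc1, hc2, hc3]
  nlinarith [h1, he, hf, sq_nonneg (m + 2)]
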